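/- Let ζ: C → ℝ be defined on a convex set C ⊆ Δ(Ω) with p₀ ∈ ri(C) and ζ(p₀) = 0. If ∫ζ dπ = 0 for every finitely supported probability measure π on C with barycenter p₀, then ζ is affine on C. -/

import Mathlib

open Finset

def simplex (Ω : Type*) [Fintype Ω] : Set (Ω → ℝ) :=
  {p | (∀ ω, 0 ≤ p ω) ∧ ∑ ω, p ω = 1}

/-- A finitely supported probability distribution over posteriors in `Δ(Ω)`. -/
structure FinDist (Ω : Type*) [Fintype Ω] where
  w : (Ω → ℝ) →₀ ℝ
  nonneg : ∀ p, 0 ≤ w p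
  total : w.sum (fun _ x => x) = 1
  supp_mem : ∀ p ∈ w.support, p ∈ simplex Ω

variable {Ω : Type*} [Fintype Ω]

/-- Barycenter of a distribution over posteriors. -/
def bary (π : FinDist Ω) : Ω → ℝ := π.w.sum (fun p x => x • p)

/-- Expected value of a real function of the posterior. -/
def eVal (π : FinDist Ω) (φ : (Ω → ℝ) → ℝ) : ℝ := π.w.sum (fun p x => x * φ p)

/-- The value of a gross payoff `φ`: `V(φ) = sup_{π ∈ Π(p₀)} ∫φ dπ − c(π)`. -/
noncomputable def V (c : FinDist Ω → EReal) (p₀ : Ω → ℝ) (φ : (Ω → ℝ) → ℝ) : EReal :=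
  ⨆ π : {π : FinDist Ω // bary π = p₀}, (((eVal π.1 φ : ℝ) : EReal) - c π.1)

/-- Extend the segment from `m` through a point of the intrinsic interior slightly past it. -/
lemma extend_past (C : Set (Ω → ℝ)) (p₀ : Ω → ℝ) (hri : p₀ ∈ intrinsicInterior ℝ C)
    {m : Ω → ℝ} (hm : m ∈ C) :
    ∃ z ∈ C, ∃ t : ℝ, 0 < t ∧ t < 1 ∧ p₀ = t • z + (1 - t) • m := by
  obtain ⟨q, hq, hq'⟩ := mem_intrinsicInterior.1 hri
  have hmspan : m ∈ affineSpan ℝ C := subset_affineSpan ℝ C hm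
  have hp₀span : p₀ ∈ affineSpan ℝ C := hq' ▸ q.2
  have hline : ∀ s : ℝ, AffineMap.lineMap m p₀ s ∈ affineSpan ℝ C := fun s =>
    AffineMap.lineMap_mem s hmspan hp₀span
  set g : ℝ → affineSpan ℝ C := fun s => ⟨AffineMap.lineMap m p₀ s, hline s⟩ with hg
  have hgc : Continuous g := by
    apply Continuous.subtype_mk
    exact (AffineMap.lineMap m p₀ : ℝ →ᵃ[ℝ] (Ω → ℝ)).continuous_of_finiteDimensional
  have hg1 : g 1 = q := by
    apply Subtype.ext
    simp [hg, hq']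
  have hopen : IsOpen (g ⁻¹' interior (((↑) : affineSpan ℝ C → (Ω → ℝ)) ⁻¹' C)) :=
    isOpen_interior.preimage hgc
  have h1mem : (1 : ℝ) ∈ g ⁻¹' interior (((↑) : affineSpan ℝ C → (Ω → ℝ)) ⁻¹' C) := by
    simp [hg1, hq]
  obtain ⟨ε, hε, hball⟩ := Metric.isOpen_iff.1 hopen 1 h1mem
  set s : ℝ := 1 + ε / 2 with hs
  have hsball : s ∈ Metric.ball (1:ℝ) ε := by
    simp only [Metric.mem_ball, hs, Real.dist_eq]
    rw [add_sub_cancel_left, abs_of_pos (by linarith)]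
    linarith
  have hzC : AffineMap.lineMap m p₀ s ∈ C := by
    have h2 : g s ∈ ((↑) : affineSpan ℝ C → (Ω → ℝ)) ⁻¹' C := interior_subset (hball hsball)
    exact h2
  have hs1 : (1:ℝ) < s := by simp [hs]; linarith
  have hs0 : s ≠ 0 := by linarith
  clear_value s
  clear hs
  refine ⟨AffineMap.lineMap m p₀ s, hzC, 1 / s, by positivity, by
    rw [div_lt_one (by linarith)]; exact hs1, ?_⟩
  rw [AffineMap.lineMap_apply_module]
  have hcan : (1 / s) • (s • p₀) = p₀ := by
    rw [smul_smul, one_div_mul_cancel hs0, one_smul]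
  rw [smul_add, hcan, smul_smul]
  have hco : 1 / s * (1 - s) = -(1 - 1 / s) := by field_simp; ring
  rw [hco, neg_smul]
  abel

/-- Combination of three Dirac weights. -/
noncomputable def mk3 (z x y : Ω → ℝ) (a b c : ℝ) : (Ω → ℝ) →₀ ℝ :=
  Finsupp.single z a + (Finsupp.single x b + Finsupp.single y c)

lemma single_app_nonneg {p q : Ω → ℝ} {a : ℝ} (ha : 0 ≤ a) : 0 ≤ Finsupp.single p a q := by
  rw [Finsupp.single_apply]
  split <;> simp [ha]

lemma mk3_nonneg {z x y : Ω → ℝ} {a b c : ℝ} (ha : 0 ≤ a) (hb : 0 ≤ b) (hc : 0 ≤ c) :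
    ∀ p, 0 ≤ mk3 z x y a b c p := fun p => by
  simp only [mk3, Finsupp.add_apply]
  have := single_app_nonneg (p := z) (q := p) ha
  have := single_app_nonneg (p := x) (q := p) hb
  have := single_app_nonneg (p := y) (q := p) hc
  linarith

lemma mk3_support {z x y : Ω → ℝ} {a b c : ℝ} :
    ((mk3 z x y a b c).support : Set (Ω → ℝ)) ⊆ {z, x, y} := by
  intro p hp
  simp only [Finset.coe_subset, Finset.mem_coe] at hp
  have h1 := Finsupp.support_add (g₁ := Finsupp.single z a)
    (g₂ := Finsupp.single x b + Finsupp.single y c) hp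
  rw [Finset.mem_union] at h1
  rcases h1 with h | h
  · left; exact Finset.mem_singleton.1 (Finsupp.support_single_subset h)
  · have h2 := Finsupp.support_add (g₁ := Finsupp.single x b) (g₂ := Finsupp.single y c) h
    rw [Finset.mem_union] at h2
    rcases h2 with h | h
    · right; left; exact Finset.mem_singleton.1 (Finsupp.support_single_subset h)
    · right; right; exact Finset.mem_singleton.1 (Finsupp.support_single_subset h)

lemma mk3_sum {M : Type*} [AddCommMonoid M] (F : (Ω → ℝ) → ℝ → M)
    (h0 : ∀ p, F p 0 = 0) (hadd : ∀ p a b, F p (a + b) = F p a + F p b)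
    (z x y : Ω → ℝ) (a b c : ℝ) :
    (mk3 z x y a b c).sum F = F z a + (F x b + F y c) := by
  rw [mk3, Finsupp.sum_add_index' h0 hadd, Finsupp.sum_add_index' h0 hadd,
    Finsupp.sum_single_index (h0 _), Finsupp.sum_single_index (h0 _),
    Finsupp.sum_single_index (h0 _)]

/-- Build a `FinDist` from three weighted points of the simplex. -/
noncomputable def mkDist (z x y : Ω → ℝ) (a b c : ℝ) (ha : 0 ≤ a) (hb : 0 ≤ b) (hc : 0 ≤ c)
    (htot : a + (b + c) = 1) (hz : z ∈ simplex Ω) (hx : x ∈ simplex Ω) (hy : y ∈ simplex Ω) :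
    FinDist Ω where
  w := mk3 z x y a b c
  nonneg := mk3_nonneg ha hb hc
  total := by
    rw [mk3_sum (fun _ x => x) (fun _ => rfl) (fun _ _ _ => rfl)]
    exact htot
  supp_mem := fun p hp => by
    have := mk3_support (z := z) (x := x) (y := y) (a := a) (b := b) (c := c) hp
    rcases this with h | h | h <;> subst h <;> assumption

lemma mkDist_bary (z x y : Ω → ℝ) (a b c : ℝ) (ha : 0 ≤ a) (hb : 0 ≤ b) (hc : 0 ≤ c)
    (htot : a + (b + c) = 1) (hz : z ∈ simplex Ω) (hx : x ∈ simplex Ω) (hy : y ∈ simplex Ω) :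
    bary (mkDist z x y a b c ha hb hc htot hz hx hy) = a • z + (b • x + c • y) := by
  unfold bary mkDist
  rw [mk3_sum (fun p x => x • p) (fun p => zero_smul ℝ p) (fun p a b => add_smul a b p)]

lemma mkDist_eVal (z x y : Ω → ℝ) (a b c : ℝ) (ha : 0 ≤ a) (hb : 0 ≤ b) (hc : 0 ≤ c)
    (htot : a + (b + c) = 1) (hz : z ∈ simplex Ω) (hx : x ∈ simplex Ω) (hy : y ∈ simplex Ω)
    (φ : (Ω → ℝ) → ℝ) :
    eVal (mkDist z x y a b c ha hb hc htot hz hx hy) φ = a * φ z + (b * φ x + c * φ y) := by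
  unfold eVal mkDist
  rw [mk3_sum (fun p x => x * φ p) (fun p => zero_mul _) (fun p a b => add_mul a b _)]

lemma mkDist_supp (z x y : Ω → ℝ) (a b c : ℝ) (ha : 0 ≤ a) (hb : 0 ≤ b) (hc : 0 ≤ c)
    (htot : a + (b + c) = 1) (hz : z ∈ simplex Ω) (hx : x ∈ simplex Ω) (hy : y ∈ simplex Ω)
    (C : Set (Ω → ℝ)) (hzC : z ∈ C) (hxC : x ∈ C) (hyC : y ∈ C) :
    (((mkDist z x y a b c ha hb hc htot hz hx hy).w).support : Set (Ω → ℝ)) ⊆ C := by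
  intro p hp
  have := mk3_support (z := z) (x := x) (y := y) (a := a) (b := b) (c := c) hp
  rcases this with h | h | h <;> subst h <;> assumption


/-- if `ζ(p₀) = 0` and `∫ζ dπ = 0` for every finitely supported
probability measure on `C` with barycenter `p₀ ∈ ri(C)`, then `ζ` is affine on `C`. -/
theorem stmt4 (C : Set (Ω → ℝ)) (hCs : C ⊆ simplex Ω) (hC : Convex ℝ C)
    (p₀ : Ω → ℝ) (hri : p₀ ∈ intrinsicInterior ℝ C)
    (ζ : (Ω → ℝ) → ℝ) (hz : ζ p₀ = 0)
    (hInt : ∀ π : FinDist Ω, (π.w.support : Set (Ω → ℝ)) ⊆ C → bary π = p₀ → eVal π ζ = 0) :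
    ∀ x ∈ C, ∀ y ∈ C, ∀ α ∈ Set.Icc (0:ℝ) 1,
      ζ (α • x + (1 - α) • y) = α * ζ x + (1 - α) * ζ y := by
  rintro x hx y hy α ⟨hα0, hα1⟩
  set m : Ω → ℝ := α • x + (1 - α) • y with hm
  have hmC : m ∈ C := hC hx hy hα0 (by linarith) (by ring)
  obtain ⟨z, hzC, t, ht0, ht1, hpt⟩ := extend_past C p₀ hri hmC
  have h1t : (0:ℝ) ≤ 1 - t := by linarith
  -- first distribution: (t, 1-t, 0) on (z, m, m)
  have htot1 : t + ((1 - t) + 0) = 1 := by ring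
  have hπ1 := hInt (mkDist z m m t (1 - t) 0 ht0.le h1t le_rfl htot1
      (hCs hzC) (hCs hmC) (hCs hmC))
    (mkDist_supp z m m t (1 - t) 0 ht0.le h1t le_rfl htot1
      (hCs hzC) (hCs hmC) (hCs hmC) C hzC hmC hmC)
    (by
      rw [mkDist_bary]
      rw [hpt]
      module)
  rw [mkDist_eVal] at hπ1
  -- second distribution: (t, (1-t)α, (1-t)(1-α)) on (z, x, y)
  have htot2 : t + ((1 - t) * α + (1 - t) * (1 - α)) = 1 := by ring
  have hπ2 := hInt (mkDist z x y t ((1 - t) * α) ((1 - t) * (1 - α))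
      ht0.le (by positivity) (by nlinarith) htot2 (hCs hzC) (hCs hx) (hCs hy))
    (mkDist_supp z x y t ((1 - t) * α) ((1 - t) * (1 - α))
      ht0.le (by positivity) (by nlinarith) htot2 (hCs hzC) (hCs hx) (hCs hy)
      C hzC hx hy)
    (by
      rw [mkDist_bary, hpt, hm]
      module)
  rw [mkDist_eVal] at hπ2
  have hne : (1 - t) ≠ 0 := by linarith
  have : (1 - t) * ζ m = (1 - t) * (α * ζ x + (1 - α) * ζ y) := by nlinarith [hπ1, hπ2]
  exact mul_left_cancel₀ hne this
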